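/- For every u ∈ (0, π/2) one has f₂(u) := −1 + 4u² + cos(4u) + u·sin(4u) > 0. -/

import Mathlib

open Set Real

private lemma aux_sin_sub_cos_pos : ∀ y ∈ Ioo (0:ℝ) π, 0 < Real.sin y - y * Real.cos y := by
  intro y hy
  have hderiv : ∀ x : ℝ, HasDerivAt (fun t : ℝ => Real.sin t - t * Real.cos t)
      (x * Real.sin x) x := by
    intro x
    have h2 : HasDerivAt (fun t : ℝ => t * Real.cos t)
        (1 * Real.cos x + x * (-Real.sin x)) x :=
      (hasDerivAt_id x).mul (Real.hasDerivAt_cos x)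
    have := (Real.hasDerivAt_sin x).sub h2
    exact this.congr_deriv (by ring)
  have hmono : StrictMonoOn (fun t : ℝ => Real.sin t - t * Real.cos t) (Icc 0 π) := by
    apply strictMonoOn_of_deriv_pos (convex_Icc _ _)
      (fun x _ => (hderiv x).continuousAt.continuousWithinAt)
    intro x hx
    rw [interior_Icc] at hx
    rw [(hderiv x).deriv]
    exact mul_pos hx.1 (Real.sin_pos_of_pos_of_lt_pi hx.1 hx.2)
  have h0 : (0:ℝ) ∈ Icc (0:ℝ) π := ⟨le_refl 0, Real.pi_pos.le⟩
  have hy' : y ∈ Icc (0:ℝ) π := ⟨hy.1.le, hy.2.le⟩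
  have := hmono h0 hy' hy.1
  simpa using this

private lemma aux_h2_pos : ∀ x ∈ Ioo (0:ℝ) (2*π),
    0 < 2 - 2 * Real.cos x - x * Real.sin x := by
  intro x hx
  have hy : x/2 ∈ Ioo (0:ℝ) π := ⟨by linarith [hx.1], by linarith [hx.2]⟩
  have hs := Real.sin_pos_of_pos_of_lt_pi hy.1 hy.2
  have hk := aux_sin_sub_cos_pos (x/2) hy
  have hx2 : 2 * (x/2) = x := by ring
  have hcos := Real.cos_two_mul (x/2)
  have hsin := Real.sin_two_mul (x/2)
  rw [hx2] at hcos hsin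
  have hpyth := Real.sin_sq_add_cos_sq (x/2)
  rw [hcos, hsin]
  nlinarith [mul_pos hs hk, hpyth]

private lemma aux_pos_on (f f' : ℝ → ℝ) (hd : ∀ x, HasDerivAt f (f' x) x)
    (h0 : f 0 = 0) (hp : ∀ x ∈ Ioo (0:ℝ) (2*π), 0 < f' x) :
    ∀ x ∈ Ioo (0:ℝ) (2*π), 0 < f x := by
  intro x hx
  have hmono : StrictMonoOn f (Icc 0 (2*π)) := by
    apply strictMonoOn_of_deriv_pos (convex_Icc _ _)
      (fun y _ => (hd y).continuousAt.continuousWithinAt)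
    intro y hy
    rw [interior_Icc] at hy
    rw [(hd y).deriv]
    exact hp y hy
  have := hmono ⟨le_refl 0, by positivity⟩ ⟨hx.1.le, hx.2.le⟩ hx.1
  rw [h0] at this
  exact this

private lemma aux_h1_pos : ∀ x ∈ Ioo (0:ℝ) (2*π),
    0 < 2 * x - 3 * Real.sin x + x * Real.cos x := by
  have hd : ∀ x : ℝ, HasDerivAt (fun t : ℝ => 2 * t - 3 * Real.sin t + t * Real.cos t)
      (2 - 2 * Real.cos x - x * Real.sin x) x := by
    intro x
    have h1 : HasDerivAt (fun t : ℝ => 2 * t) 2 x := by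
      simpa using (hasDerivAt_id x).const_mul (2:ℝ)
    have h2 : HasDerivAt (fun t : ℝ => 3 * Real.sin t) (3 * Real.cos x) x :=
      (Real.hasDerivAt_sin x).const_mul 3
    have h3 : HasDerivAt (fun t : ℝ => t * Real.cos t)
        (1 * Real.cos x + x * (-Real.sin x)) x :=
      (hasDerivAt_id x).mul (Real.hasDerivAt_cos x)
    have := (h1.sub h2).add h3
    exact this.congr_deriv (by ring)
  exact aux_pos_on _ _ hd (by simp) aux_h2_pos

private lemma aux_h_pos : ∀ x ∈ Ioo (0:ℝ) (2*π),
    0 < x ^ 2 - 4 + 4 * Real.cos x + x * Real.sin x := by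
  have hd : ∀ x : ℝ, HasDerivAt (fun t : ℝ => t ^ 2 - 4 + 4 * Real.cos t + t * Real.sin t)
      (2 * x - 3 * Real.sin x + x * Real.cos x) x := by
    intro x
    have h1 : HasDerivAt (fun t : ℝ => t ^ 2 - 4) (2 * x) x := by
      simpa using ((hasDerivAt_pow 2 x).sub_const 4)
    have h2 : HasDerivAt (fun t : ℝ => 4 * Real.cos t) (4 * (-Real.sin x)) x :=
      (Real.hasDerivAt_cos x).const_mul 4
    have h3 : HasDerivAt (fun t : ℝ => t * Real.sin t)
        (1 * Real.sin x + x * Real.cos x) x :=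
      (hasDerivAt_id x).mul (Real.hasDerivAt_sin x)
    have := (h1.add h2).add h3
    exact this.congr_deriv (by ring)
  exact aux_pos_on _ _ hd (by simp) aux_h1_pos

/-- Lemma: `f₂(u) = −1 + 4u² + cos(4u) + u·sin(4u) > 0` for `u ∈ (0, π/2)`. -/
theorem f2_pos :
    ∀ u ∈ Ioo 0 (π/2),
      0 < -1 + 4 * u ^ 2 + cos (4 * u) + u * sin (4 * u) := by
  intro u hu
  have hx : (4 * u) ∈ Ioo (0:ℝ) (2*π) := ⟨by linarith [hu.1], by linarith [hu.2]⟩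
  have h := aux_h_pos (4 * u) hx
  nlinarith [h]
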